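/- arXiv:1805.07308 — 2 statements merged into one kernel-verified Lean document; each statement's English description precedes it below -/
import Mathlib

section
/- With f₀ and f₁ as above (f₀ conjugate via φ to the unit translation on ℝ, f₁(x) = 1-x), the forward orbit of any point x ∈ (0,1) under the iterated function system {f₀, f₁} is contained in the union {f₀ʲ(x) : j ∈ ℤ} ∪ {f₀ʲ(1-x) : j ∈ ℤ}, whose set of accumulation points in [0,1] is contained in {0, 1}. In particular the forward orbit of x is not dense in [0,1]. -/
open Set Filter

/-- `j`-th iterate, for `j : ℤ`: iterates of `f` for `j ≥ 0`, of its inverse `g` otherwise. -/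
noncomputable def zIter (f g : ℝ → ℝ) (j : ℤ) : ℝ → ℝ :=
  if 0 ≤ j then f^[j.toNat] else g^[(-j).toNat]

/-- Apply the word `w` (symbols `false ↦ f₀`, `true ↦ f₁`) to the point `x`. -/
def applyWord (f₀ f₁ : ℝ → ℝ) (w : List Bool) (x : ℝ) : ℝ :=
  w.foldl (fun y b => if b then f₁ y else f₀ y) x

/-- Forward orbit of `x` under the IFS `{f₀, f₁}`. -/
def forwardOrbit (f₀ f₁ : ℝ → ℝ) (x : ℝ) : Set ℝ :=
  {y | ∃ w : List Bool, applyWord f₀ f₁ w x = y}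

/-- with `f₀` conjugate via `φ` to the unit translation on `ℝ` (extended by
fixing `0` and `1`), `g₀` its inverse, and `f₁ x = 1 - x`: the forward orbit of any
`x ∈ (0,1)` under the IFS `{f₀, f₁}` is contained in
`{f₀ʲ x : j ∈ ℤ} ∪ {f₀ʲ (1-x) : j ∈ ℤ}`, its accumulation points in `[0,1]` lie
in `{0, 1}`, and the orbit is not dense in `[0,1]`. -/
theorem stmt3 (φ ψ f₀ g₀ f₁ : ℝ → ℝ)
    (hmono : StrictMono φ)
    (hrange : range φ = Ioo (0:ℝ) 1)
    (hsym : ∀ y : ℝ, φ y = 1 - φ (-y))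
    (hψφ : ∀ y : ℝ, ψ (φ y) = y)
    (hφψ : ∀ x ∈ Ioo (0:ℝ) 1, φ (ψ x) = x)
    (hf₀ : ∀ x ∈ Ioo (0:ℝ) 1, f₀ x = φ (ψ x + 1))
    (hf₀0 : f₀ 0 = 0) (hf₀1 : f₀ 1 = 1)
    (hg₀ : ∀ x ∈ Ioo (0:ℝ) 1, g₀ x = φ (ψ x - 1))
    (hg₀0 : g₀ 0 = 0) (hg₀1 : g₀ 1 = 1)
    (hf₁ : ∀ x, f₁ x = 1 - x) :
    ∀ x ∈ Ioo (0:ℝ) 1,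
      forwardOrbit f₀ f₁ x ⊆
          ((fun j : ℤ => zIter f₀ g₀ j x) '' univ) ∪
          ((fun j : ℤ => zIter f₀ g₀ j (1 - x)) '' univ) ∧
      {y : ℝ | y ∈ Icc (0:ℝ) 1 ∧ AccPt y (𝓟 (forwardOrbit f₀ f₁ x))} ⊆ {0, 1} ∧
      ¬ (Icc (0:ℝ) 1 ⊆ closure (forwardOrbit f₀ f₁ x)) := by
  intro x hx
  have hφmem : ∀ t, φ t ∈ Ioo (0:ℝ) 1 := fun t => hrange ▸ mem_range_self t
  have hf₀φ : ∀ t, f₀ (φ t) = φ (t + 1) := by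
    intro t; rw [hf₀ _ (hφmem t), hψφ]
  have hg₀φ : ∀ t, g₀ (φ t) = φ (t - 1) := by
    intro t; rw [hg₀ _ (hφmem t), hψφ]
  have hf₁φ : ∀ t, f₁ (φ t) = φ (-t) := by
    intro t; rw [hf₁, hsym (-t), neg_neg]
  set s := ψ x with hs
  have hxφ : φ s = x := hφψ x hx
  -- every orbit point has the form φ(±t + j)
  have key : ∀ (w : List Bool) (t : ℝ),
      (∃ j : ℤ, applyWord f₀ f₁ w (φ t) = φ (t + j)) ∨
      (∃ j : ℤ, applyWord f₀ f₁ w (φ t) = φ (-t + j)) := by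
    intro w
    induction w with
    | nil => intro t; exact Or.inl ⟨0, by simp [applyWord]⟩
    | cons b w ih =>
      intro t
      have hstep : applyWord f₀ f₁ (b :: w) (φ t)
          = applyWord f₀ f₁ w (if b then f₁ (φ t) else f₀ (φ t)) := rfl
      cases b with
      | false =>
        rw [hstep, if_neg (by simp), hf₀φ]
        rcases ih (t + 1) with ⟨j, hj⟩ | ⟨j, hj⟩
        · exact Or.inl ⟨j + 1, by rw [hj]; congr 1; push_cast; ring⟩
        · exact Or.inr ⟨j - 1, by rw [hj]; congr 1; push_cast; ring⟩
      | true =>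
        rw [hstep, if_pos rfl, hf₁φ]
        rcases ih (-t) with ⟨j, hj⟩ | ⟨j, hj⟩
        · exact Or.inr ⟨j, by rw [hj]⟩
        · exact Or.inl ⟨j, by rw [hj, neg_neg]⟩
  -- zIter on φ-coordinates
  have hiterf : ∀ (n : ℕ) (t : ℝ), f₀^[n] (φ t) = φ (t + n) := by
    intro n
    induction n with
    | zero => intro t; simp
    | succ n ih =>
      intro t
      rw [Function.iterate_succ_apply, hf₀φ, ih]
      congr 1; push_cast; ring
  have hiterg : ∀ (n : ℕ) (t : ℝ), g₀^[n] (φ t) = φ (t - n) := by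
    intro n
    induction n with
    | zero => intro t; simp
    | succ n ih =>
      intro t
      rw [Function.iterate_succ_apply, hg₀φ, ih]
      congr 1; push_cast; ring
  have hz : ∀ (j : ℤ) (t : ℝ), zIter f₀ g₀ j (φ t) = φ (t + j) := by
    intro j t
    unfold zIter
    split_ifs with h
    · rw [hiterf]
      congr 2
      exact_mod_cast congrArg (Int.cast : ℤ → ℝ) (Int.toNat_of_nonneg h)
    · rw [hiterg]
      have hj : ((-j).toNat : ℝ) = -j := by
        exact_mod_cast congrArg (Int.cast : ℤ → ℝ)
          (Int.toNat_of_nonneg (neg_nonneg.mpr (le_of_lt (lt_of_not_ge h))))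
      rw [hj]; congr 1; ring
  have h1x : (1 : ℝ) - x = φ (-s) := by
    rw [← hxφ, hsym (-s), neg_neg]
  -- finiteness of each ℤ-orbit in a compact subinterval of (0,1)
  have hFin : ∀ (c a b : ℝ), a ∈ Ioo (0:ℝ) 1 → b ∈ Ioo (0:ℝ) 1 →
      ({y | ∃ j : ℤ, y = φ (c + j)} ∩ Ioo a b).Finite := by
    intro c a b ha hb
    have hsub : {y | ∃ j : ℤ, y = φ (c + j)} ∩ Ioo a b ⊆
        (fun j : ℤ => φ (c + j)) '' (Icc ⌈ψ a - c⌉ ⌊ψ b - c⌋) := by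
      rintro y ⟨⟨j, rfl⟩, hy⟩
      refine ⟨j, ⟨?_, ?_⟩, rfl⟩
      · rw [Int.ceil_le]
        have h1 : a < φ (c + j) := hy.1
        rw [← hφψ a ha] at h1
        have := hmono.lt_iff_lt.mp h1
        linarith
      · rw [Int.le_floor]
        have h1 : φ (c + j) < b := hy.2
        rw [← hφψ b hb] at h1
        have := hmono.lt_iff_lt.mp h1
        linarith
    exact ((Set.finite_Icc _ _).image _).subset hsub
  -- the orbit lies in the two ℤ-orbits (abstract form)
  have horb : forwardOrbit f₀ f₁ x ⊆
      {y | ∃ j : ℤ, y = φ (s + j)} ∪ {y | ∃ j : ℤ, y = φ (-s + j)} := by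
    rintro y ⟨w, rfl⟩
    rw [← hxφ]
    rcases key w s with ⟨j, hj⟩ | ⟨j, hj⟩
    · exact Or.inl ⟨j, hj⟩
    · exact Or.inr ⟨j, hj⟩
  -- orbit ∩ (a,b) is finite
  have hOrbFin : ∀ a b : ℝ, a ∈ Ioo (0:ℝ) 1 → b ∈ Ioo (0:ℝ) 1 →
      (forwardOrbit f₀ f₁ x ∩ Ioo a b).Finite := by
    intro a b ha hb
    refine ((hFin s a b ha hb).union (hFin (-s) a b ha hb)).subset ?_
    rw [← union_inter_distrib_right]
    exact inter_subset_inter_left _ horb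
  refine ⟨?_, ?_, ?_⟩
  · -- part 1
    rintro y ⟨w, rfl⟩
    rcases key w s with ⟨j, hj⟩ | ⟨j, hj⟩
    · left
      refine ⟨j, mem_univ j, ?_⟩
      show zIter f₀ g₀ j x = applyWord f₀ f₁ w x
      rw [← hxφ, hz]
      exact hj.symm
    · right
      refine ⟨j, mem_univ j, ?_⟩
      show zIter f₀ g₀ j (1 - x) = applyWord f₀ f₁ w x
      rw [h1x, hz, ← hxφ]
      exact hj.symm
  · -- part 2
    rintro y ⟨hyI, hacc⟩
    by_contra hy01
    simp only [mem_insert_iff, mem_singleton_iff, not_or] at hy01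
    have hy : y ∈ Ioo (0:ℝ) 1 :=
      ⟨lt_of_le_of_ne hyI.1 (Ne.symm hy01.1), lt_of_le_of_ne hyI.2 hy01.2⟩
    have ha : y / 2 ∈ Ioo (0:ℝ) 1 := ⟨by linarith [hy.1], by linarith [hy.2]⟩
    have hb : (y + 1) / 2 ∈ Ioo (0:ℝ) 1 := ⟨by linarith [hy.1], by linarith [hy.2]⟩
    have hF := hOrbFin (y / 2) ((y + 1) / 2) ha hb
    set F' := (forwardOrbit f₀ f₁ x ∩ Ioo (y / 2) ((y + 1) / 2)) \ {y} with hF'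
    have hF'fin : F'.Finite := hF.diff
    have hU : Ioo (y / 2) ((y + 1) / 2) ∩ F'ᶜ ∈ nhds y := by
      refine (isOpen_Ioo.inter hF'fin.isClosed.isOpen_compl).mem_nhds ?_
      exact ⟨⟨by linarith [hy.1], by linarith [hy.2]⟩, fun h => h.2 rfl⟩
    obtain ⟨z, ⟨hzU, hzT⟩, hzne⟩ := accPt_iff_nhds.mp hacc _ hU
    exact hzU.2 ⟨⟨hzT, hzU.1⟩, hzne⟩
  · -- part 3
    intro hsub
    have ha : (1/4 : ℝ) ∈ Ioo (0:ℝ) 1 := by norm_num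
    have hb : (1/2 : ℝ) ∈ Ioo (0:ℝ) 1 := by norm_num
    have hF := hOrbFin (1/4) (1/2) ha hb
    obtain ⟨y, hyI, hyF⟩ :=
      ((Set.Ioo_infinite (by norm_num : (1/4:ℝ) < 1/2)).diff hF).nonempty
    have hy' : y ∈ closure (forwardOrbit f₀ f₁ x) :=
      hsub ⟨by linarith [hyI.1], by linarith [hyI.2]⟩
    have hdecomp : forwardOrbit f₀ f₁ x ⊆
        (forwardOrbit f₀ f₁ x ∩ Ioo (1/4:ℝ) (1/2)) ∪ (Ioo (1/4:ℝ) (1/2))ᶜ := by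
      intro z hz
      by_cases h : z ∈ Ioo (1/4:ℝ) (1/2)
      · exact Or.inl ⟨hz, h⟩
      · exact Or.inr h
    have hcl := closure_mono hdecomp hy'
    rw [closure_union, hF.isClosed.closure_eq,
      isOpen_Ioo.isClosed_compl.closure_eq] at hcl
    rcases hcl with h | h
    · exact hyF h
    · exact h hyI
end

section
/- Let Π : Σ_A → Σ₂ be the map replacing each symbol i_L or i_R by i ∈ {0,1}. Let ν be an ergodic shift-invariant measure on Σ_A and define its mirror ν̄ by ν̄(C) = ν(C̄) on cylinders, where C̄ mirrors each symbol (i_L ↔ i_R). Then: (a) ν̄ is shift-invariant and Π*ν̄ = Π*ν; (b) if ν̂ is any ergodic shift-invariant measure on Σ_A with Π*ν̂ = Π*ν, then ν̂ = ν or ν̂ = ν̄. -/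
open Set MeasureTheory

/-- The transition matrix `A` on the alphabet `{0_L, 1_L, 0_R, 1_R}`
(coded as `0, 1, 2, 3`). -/
def matA : Matrix (Fin 4) (Fin 4) ℕ :=
  !![1, 1, 0, 0; 0, 0, 1, 1; 0, 0, 1, 1; 1, 1, 0, 0]

/-- The subshift of finite type `Σ_A` inside the full shift on four symbols. -/
def SigmaA : Set (ℤ → Fin 4) := {ξ | ∀ k : ℤ, matA (ξ k) (ξ (k + 1)) = 1}

/-- The shift map on bi-infinite sequences of four symbols. -/
def shift4 : (ℤ → Fin 4) → (ℤ → Fin 4) := fun ξ k => ξ (k + 1)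

/-- The mirror involution on symbols: `0_L ↔ 0_R`, `1_L ↔ 1_R`. -/
def mirrorSym : Fin 4 → Fin 4 := ![2, 3, 0, 1]

/-- The mirror involution on sequences. -/
def mirrorSeq : (ℤ → Fin 4) → (ℤ → Fin 4) := fun ξ k => mirrorSym (ξ k)

/-- The factor map `Π : Σ_A → Σ₂` forgetting the `L/R` subscript:
`0_L, 0_R ↦ 0` and `1_L, 1_R ↦ 1`. -/
def projSeq : (ℤ → Fin 4) → (ℤ → Bool) := fun ξ k => ![false, true, false, true] (ξ k)


open ENNReal

namespace Stmt10
def bitSym : Fin 4 → Bool := ![false, true, false, true]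
def tagSym : Fin 4 → Bool := ![false, false, true, true]
def encSym : Bool → Bool → Fin 4 := fun b t =>
  if t then (if b then 3 else 2) else (if b then 1 else 0)

def parN (y : ℤ → Bool) : ℕ → Bool
  | 0 => false
  | n+1 => xor (parN y n) (y n)

def parM (y : ℤ → Bool) : ℕ → Bool
  | 0 => false
  | m+1 => xor (parM y m) (y (-(m+1)))

def par (y : ℤ → Bool) (k : ℤ) : Bool :=
  if 0 ≤ k then parN y k.toNat else parM y (-k).toNat

def liftL : (ℤ → Bool) → (ℤ → Fin 4) := fun y k => encSym (y k) (par y k)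

lemma par_zero (y : ℤ → Bool) : par y 0 = false := by simp [par, parN]

lemma par_succ (y : ℤ → Bool) (k : ℤ) : par y (k + 1) = xor (par y k) (y k) := by
  rcases le_or_gt 0 k with hk | hk
  · have h1 : (0:ℤ) ≤ k + 1 := by omega
    have h2 : (k + 1).toNat = k.toNat + 1 := by omega
    have h3 : (k.toNat : ℤ) = k := Int.toNat_of_nonneg hk
    simp only [par, if_pos hk, if_pos h1, h2, parN, h3]
  · rcases eq_or_lt_of_le (by omega : k ≤ -1) with hk1 | hk1
    · subst hk1
      simp [par, parM, parN]
    · have h1 : ¬ (0:ℤ) ≤ k + 1 := by omega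
      have h2 : ¬ (0:ℤ) ≤ k := by omega
      set n : ℕ := (-(k+1)).toNat with hn
      have h3 : (-k).toNat = n + 1 := by omega
      have h4 : -((n:ℤ) + 1) = k := by omega
      simp only [par, if_neg h1, if_neg h2, h3, parM, h4]
      rw [← hn]
      simp [Bool.xor_assoc]

lemma tag_step : ∀ a b : Fin 4, matA a b = 1 → tagSym b = xor (tagSym a) (bitSym a) := by
  intro a b; fin_cases a <;> fin_cases b <;> decide

lemma enc_bit_tag : ∀ s : Fin 4, encSym (bitSym s) (tagSym s) = s := by decide

lemma proj_eq_bit (ξ : ℤ → Fin 4) (k : ℤ) : projSeq ξ k = bitSym (ξ k) := rfl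

lemma par_proj {ξ : ℤ → Fin 4} (hξ : ξ ∈ SigmaA) (h0 : tagSym (ξ 0) = false) :
    ∀ k : ℤ, par (projSeq ξ) k = tagSym (ξ k) := by
  intro k
  induction k using Int.induction_on with
  | zero => rw [par_zero, h0]
  | succ i ih =>
      rw [par_succ, ih, proj_eq_bit, ← tag_step _ _ (hξ i)]
  | pred i ih =>
      have hstep := tag_step _ _ (hξ (-(i:ℤ) - 1))
      have harg : (-(i:ℤ) - 1) + 1 = -(i:ℤ) := by ring
      rw [harg] at hstep
      have hps := par_succ (projSeq ξ) (-(i:ℤ) - 1)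
      rw [harg, ih, hstep, proj_eq_bit] at hps
      cases hb : bitSym (ξ (-(i:ℤ) - 1)) <;> rw [hb] at hps <;>
        simp only [Bool.xor_false, Bool.xor_true] at hps
      · exact hps.symm
      · exact (Bool.not_inj hps).symm

lemma liftL_proj {ξ : ℤ → Fin 4} (hξ : ξ ∈ SigmaA) (h0 : tagSym (ξ 0) = false) :
    liftL (projSeq ξ) = ξ := by
  funext k
  rw [liftL, proj_eq_bit, par_proj hξ h0, enc_bit_tag]

lemma mirror_mem {ξ : ℤ → Fin 4} (hξ : ξ ∈ SigmaA) : mirrorSeq ξ ∈ SigmaA := by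
  intro k
  have : ∀ a b : Fin 4, matA a b = 1 → matA (mirrorSym a) (mirrorSym b) = 1 := by
    intro a b; fin_cases a <;> fin_cases b <;> decide
  exact this _ _ (hξ k)

lemma proj_mirror : projSeq ∘ mirrorSeq = projSeq := by
  funext ξ k
  have : ∀ s : Fin 4, ![false, true, false, true] (mirrorSym s) = ![false, true, false, true] s :=
    by decide
  exact this (ξ k)

lemma mirror_mirror (ξ : ℤ → Fin 4) : mirrorSeq (mirrorSeq ξ) = ξ := by
  funext k
  have : ∀ s : Fin 4, mirrorSym (mirrorSym s) = s := by decide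
  exact this (ξ k)

lemma tag_mirror (s : Fin 4) : tagSym (mirrorSym s) = !(tagSym s) := by revert s; decide

lemma liftL_proj_R {ξ : ℤ → Fin 4} (hξ : ξ ∈ SigmaA) (h0 : tagSym (ξ 0) = true) :
    liftL (projSeq ξ) = mirrorSeq ξ := by
  have h1 : tagSym (mirrorSeq ξ 0) = false := by
    rw [show mirrorSeq ξ 0 = mirrorSym (ξ 0) from rfl, tag_mirror, h0]; rfl
  have := liftL_proj (mirror_mem hξ) h1
  rw [show projSeq (mirrorSeq ξ) = projSeq ξ from congrFun proj_mirror ξ] at this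
  exact this


/-! ### Measurability -/

lemma measurable_shift4 : Measurable shift4 :=
  measurable_pi_lambda _ fun k => measurable_pi_apply (k + 1)

lemma measurable_ishift4 : Measurable (fun ξ : ℤ → Fin 4 => fun k => ξ (k - 1)) :=
  measurable_pi_lambda _ fun k => measurable_pi_apply (k - 1)

lemma measurable_mirrorSeq : Measurable mirrorSeq :=
  measurable_pi_lambda _ fun k =>
    (measurable_of_countable mirrorSym).comp (measurable_pi_apply k)

lemma measurable_projSeq : Measurable projSeq :=
  measurable_pi_lambda _ fun k =>
    (measurable_of_countable ![false, true, false, true]).comp (measurable_pi_apply k)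

lemma measurable_parN (n : ℕ) : Measurable fun y : ℤ → Bool => parN y n := by
  induction n with
  | zero => exact measurable_const
  | succ n ih =>
      exact (measurable_of_countable (fun p : Bool × Bool => xor p.1 p.2)).comp
        (ih.prodMk (measurable_pi_apply _))

lemma measurable_parM (m : ℕ) : Measurable fun y : ℤ → Bool => parM y m := by
  induction m with
  | zero => exact measurable_const
  | succ m ih =>
      exact (measurable_of_countable (fun p : Bool × Bool => xor p.1 p.2)).comp
        (ih.prodMk (measurable_pi_apply _))

lemma measurable_par (k : ℤ) : Measurable fun y : ℤ → Bool => par y k := by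
  unfold par
  by_cases h : 0 ≤ k
  · simp only [if_pos h]; exact measurable_parN _
  · simp only [if_neg h]; exact measurable_parM _

lemma measurable_liftL : Measurable liftL :=
  measurable_pi_lambda _ fun k =>
    (measurable_of_countable (fun p : Bool × Bool => encSym p.1 p.2)).comp
      ((measurable_pi_apply k).prodMk (measurable_par k))

lemma measurableSet_SigmaA : MeasurableSet SigmaA := by
  have : SigmaA = ⋂ k : ℤ, (fun ξ : ℤ → Fin 4 => (ξ k, ξ (k + 1))) ⁻¹'
      {p : Fin 4 × Fin 4 | matA p.1 p.2 = 1} := by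
    ext ξ; simp [SigmaA, Set.mem_iInter]
  rw [this]
  exact MeasurableSet.iInter fun k =>
    ((measurable_pi_apply k).prodMk (measurable_pi_apply (k + 1)))
      (measurable_of_countable (fun p : Fin 4 × Fin 4 => matA p.1 p.2) (measurableSet_singleton 1))

def Ltag : Set (ℤ → Fin 4) := {ξ | tagSym (ξ 0) = false}

lemma measurableSet_Ltag : MeasurableSet Ltag :=
  ((measurable_of_countable tagSym).comp (measurable_pi_apply 0)) (measurableSet_singleton false)

/-! ### The fiber-sum lemma -/

lemma fiber_sum (α : Measure (ℤ → Fin 4)) [IsProbabilityMeasure α] (hs : α SigmaA = 1) :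
    α + α.map mirrorSeq =
      (α.map projSeq).map liftL + (α.map projSeq).map (mirrorSeq ∘ liftL) := by
  have hGc : α SigmaAᶜ = 0 := by
    have := measure_compl measurableSet_SigmaA (measure_ne_top α SigmaA)
    rw [hs, measure_univ] at this
    simpa using this
  ext C hC
  rw [Measure.add_apply, Measure.add_apply,
      Measure.map_apply measurable_mirrorSeq hC,
      Measure.map_apply measurable_liftL hC,
      Measure.map_apply (measurable_mirrorSeq.comp measurable_liftL) hC,
      Measure.map_apply measurable_projSeq (measurable_liftL hC),
      Measure.map_apply measurable_projSeq ((measurable_mirrorSeq.comp measurable_liftL) hC)]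
  have split : ∀ D : Set (ℤ → Fin 4), MeasurableSet D →
      α D = α (D ∩ (SigmaA ∩ Ltag)) + α (D ∩ (SigmaA ∩ Ltagᶜ)) := by
    intro D hD
    have h1 : α (D ∩ SigmaA) = α D := measure_inter_conull hGc
    rw [← h1, show D ∩ SigmaA = (D ∩ (SigmaA ∩ Ltag)) ∪ (D ∩ (SigmaA ∩ Ltagᶜ)) from by
      rw [← Set.inter_union_distrib_left, Set.inter_union_compl]]
    exact measure_union
      (Disjoint.mono (Set.inter_subset_right.trans Set.inter_subset_right)
        (Set.inter_subset_right.trans Set.inter_subset_right) disjoint_compl_right)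
      (hD.inter (measurableSet_SigmaA.inter measurableSet_Ltag.compl))
  have memL : ∀ ξ : ℤ → Fin 4, ξ ∈ SigmaA ∩ Ltag → liftL (projSeq ξ) = ξ := by
    rintro ξ ⟨hg, hl⟩
    exact liftL_proj hg hl
  have memR : ∀ ξ : ℤ → Fin 4, ξ ∈ SigmaA ∩ Ltagᶜ → liftL (projSeq ξ) = mirrorSeq ξ := by
    rintro ξ ⟨hg, hl⟩
    refine liftL_proj_R hg ?_
    have : ¬ tagSym (ξ 0) = false := hl
    simpa using this
  have e1 : projSeq ⁻¹' (liftL ⁻¹' C) ∩ (SigmaA ∩ Ltag) = C ∩ (SigmaA ∩ Ltag) := by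
    ext ξ
    simp only [Set.mem_inter_iff, Set.mem_preimage]
    constructor
    · rintro ⟨h1, h2⟩; rw [memL ξ h2] at h1; exact ⟨h1, h2⟩
    · rintro ⟨h1, h2⟩; rw [memL ξ h2]; exact ⟨h1, h2⟩
  have e2 : projSeq ⁻¹' (liftL ⁻¹' C) ∩ (SigmaA ∩ Ltagᶜ) =
      mirrorSeq ⁻¹' C ∩ (SigmaA ∩ Ltagᶜ) := by
    ext ξ
    simp only [Set.mem_inter_iff, Set.mem_preimage]
    constructor
    · rintro ⟨h1, h2⟩; rw [memR ξ h2] at h1; exact ⟨h1, h2⟩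
    · rintro ⟨h1, h2⟩; rw [memR ξ h2]; exact ⟨h1, h2⟩
  have e3 : projSeq ⁻¹' ((mirrorSeq ∘ liftL) ⁻¹' C) ∩ (SigmaA ∩ Ltag) =
      mirrorSeq ⁻¹' C ∩ (SigmaA ∩ Ltag) := by
    ext ξ
    simp only [Set.mem_inter_iff, Set.mem_preimage, Function.comp_apply]
    constructor
    · rintro ⟨h1, h2⟩; rw [memL ξ h2] at h1; exact ⟨h1, h2⟩
    · rintro ⟨h1, h2⟩; rw [memL ξ h2]; exact ⟨h1, h2⟩
  have e4 : projSeq ⁻¹' ((mirrorSeq ∘ liftL) ⁻¹' C) ∩ (SigmaA ∩ Ltagᶜ) =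
      C ∩ (SigmaA ∩ Ltagᶜ) := by
    ext ξ
    simp only [Set.mem_inter_iff, Set.mem_preimage, Function.comp_apply]
    constructor
    · rintro ⟨h1, h2⟩; rw [memR ξ h2, mirror_mirror] at h1; exact ⟨h1, h2⟩
    · rintro ⟨h1, h2⟩; rw [memR ξ h2, mirror_mirror]; exact ⟨h1, h2⟩
  rw [split C hC, split (mirrorSeq ⁻¹' C) (measurable_mirrorSeq hC),
      split (projSeq ⁻¹' (liftL ⁻¹' C)) (measurable_projSeq (measurable_liftL hC)),
      split (projSeq ⁻¹' ((mirrorSeq ∘ liftL) ⁻¹' C))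
        (measurable_projSeq ((measurable_mirrorSeq.comp measurable_liftL) hC)),
      e1, e2, e3, e4]
  ring

end Stmt10

lemma ergodic_dichotomy {X : Type*} [MeasurableSpace X] {T T' : X → X}
    (hT : Measurable T) (hT' : Measurable T')
    (h1 : ∀ x, T' (T x) = x) (h2 : ∀ x, T (T' x) = x)
    (α β : Measure X) [IsProbabilityMeasure α] [IsProbabilityMeasure β]
    (hα : Ergodic T α) (hβ : Ergodic T β) : α = β ∨ α ⟂ₘ β := by
  set γ : Measure X := α + β with hγdef
  have hαγ : α ≪ γ := by
    rw [hγdef]; exact Measure.absolutelyContinuous_of_le (Measure.le_add_right le_rfl)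
  have hβγ : β ≪ γ := by
    rw [hγdef]; exact Measure.absolutelyContinuous_of_le (Measure.le_add_left le_rfl)
  set f := α.rnDeriv γ with hfdef
  set g := β.rnDeriv γ with hgdef
  have hf : Measurable f := Measure.measurable_rnDeriv _ _
  have hg : Measurable g := Measure.measurable_rnDeriv _ _
  have hαd : γ.withDensity f = α := Measure.withDensity_rnDeriv_eq α γ hαγ
  have hβd : γ.withDensity g = β := Measure.withDensity_rnDeriv_eq β γ hβγ
  -- f + g = 1 a.e.
  have hfg : f + g =ᵐ[γ] 1 := by
    have h1' : γ.withDensity (fun a => f a + g a) = γ := by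
      rw [show (fun a => f a + g a) = f + g from rfl, withDensity_add_left hf, hαd, hβd]
    have h2' := Measure.rnDeriv_withDensity γ (hf.add hg)
    rw [show f + g = fun a => f a + g a from rfl, h1'] at h2'
    exact h2'.symm.trans (Measure.rnDeriv_self γ)
  -- invariance of γ
  have hmapα : α.map T = α := hα.toMeasurePreserving.map_eq
  have hmapβ : β.map T = β := hβ.toMeasurePreserving.map_eq
  have hmapγ : γ.map T = γ := by
    rw [hγdef, Measure.map_add _ _ hT, hmapα, hmapβ]
  have hmapγ' : γ.map T' = γ := by
    conv_lhs => rw [← hmapγ]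
    rw [Measure.map_map hT' hT]
    have : T' ∘ T = id := funext h1
    rw [this, Measure.map_id]
  -- f ∘ T = f a.e.
  have key : ∀ (ρ : Measure X) (h : ρ ≪ γ) (hd : γ.withDensity (ρ.rnDeriv γ) = ρ)
      (hmapρ : ρ.map T = ρ), (ρ.rnDeriv γ) ∘ T =ᵐ[γ] ρ.rnDeriv γ := by
    intro ρ hρ hd hmapρ
    set F := ρ.rnDeriv γ with hF
    have hFm : Measurable F := Measure.measurable_rnDeriv _ _
    have hwd : γ.withDensity (F ∘ T) = ρ := by
      ext s hs
      rw [withDensity_apply _ hs]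
      calc ∫⁻ x in s, (F ∘ T) x ∂γ
          = ∫⁻ x in s, (F ∘ T) x ∂(γ.map T') := by rw [hmapγ']
        _ = ∫⁻ x in T' ⁻¹' s, (F ∘ T) (T' x) ∂γ := setLIntegral_map hs (hFm.comp hT) hT'
        _ = ∫⁻ x in T' ⁻¹' s, F x ∂γ := by
              refine setLIntegral_congr_fun (hT' hs) ?_
              intro x _; simp [Function.comp, h2]
        _ = ρ (T' ⁻¹' s) := by rw [← withDensity_apply _ (hT' hs), hd]
        _ = ρ (T ⁻¹' (T' ⁻¹' s)) := by
              rw [← hmapρ, Measure.map_apply hT (hT' hs)]; rw [hmapρ]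
        _ = ρ s := by
              congr 1; ext x; simp [h1]
    have h2' := Measure.rnDeriv_withDensity γ (hFm.comp hT)
    rw [hwd] at h2'
    exact h2'.symm
  have hfT : f ∘ T =ᵐ[γ] f := key α hαγ hαd hmapα
  have hγuniv : γ univ = 2 := by
    rw [hγdef, Measure.add_apply, measure_univ, measure_univ]; norm_num
  have hγne : γ univ ≠ 0 := by rw [hγuniv]; norm_num
  have hintf : ∫⁻ x, f x ∂γ = 1 := by
    have := withDensity_apply (μ := γ) f (MeasurableSet.univ : MeasurableSet (univ : Set X))
    rw [hαd, setLIntegral_univ, measure_univ] at this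
    exact this.symm
  have hinthalf : ∫⁻ x, (fun _ : X => (2⁻¹ : ℝ≥0∞)) x ∂γ = 1 := by
    rw [lintegral_const, hγuniv, ENNReal.inv_mul_cancel two_ne_zero ENNReal.ofNat_ne_top]
  -- the two key sets
  set A : Set X := {x | (2⁻¹ : ℝ≥0∞) < f x} with hAdef
  set B : Set X := {x | f x < (2⁻¹ : ℝ≥0∞)} with hBdef
  have hA : MeasurableSet A := measurableSet_lt measurable_const hf
  have hB : MeasurableSet B := measurableSet_lt hf measurable_const
  have hAinv : T ⁻¹' A =ᵐ[γ] A := by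
    refine Filter.eventuallyEq_set.2 ?_
    filter_upwards [hfT] with x hx
    simp only [Set.mem_preimage, hAdef, Set.mem_setOf_eq]
    rw [show f (T x) = (f ∘ T) x from rfl, hx]
  have hBinv : T ⁻¹' B =ᵐ[γ] B := by
    refine Filter.eventuallyEq_set.2 ?_
    filter_upwards [hfT] with x hx
    simp only [Set.mem_preimage, hBdef, Set.mem_setOf_eq]
    rw [show f (T x) = (f ∘ T) x from rfl, hx]
  -- ergodicity dichotomies
  have dichA : ∀ (ρ : Measure X), ρ ≪ γ → Ergodic T ρ → ρ A = 0 ∨ ρ Aᶜ = 0 := by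
    intro ρ hργ hρ
    rcases hρ.quasiErgodic.ae_empty_or_univ₀ hA.nullMeasurableSet
      (hAinv.filter_mono hργ.ae_le) with h | h
    · exact Or.inl (ae_eq_empty.mp h)
    · exact Or.inr (ae_eq_univ.mp h)
  have dichB : ∀ (ρ : Measure X), ρ ≪ γ → Ergodic T ρ → ρ B = 0 ∨ ρ Bᶜ = 0 := by
    intro ρ hργ hρ
    rcases hρ.quasiErgodic.ae_empty_or_univ₀ hB.nullMeasurableSet
      (hBinv.filter_mono hργ.ae_le) with h | h
    · exact Or.inl (ae_eq_empty.mp h)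
    · exact Or.inr (ae_eq_univ.mp h)
  -- impossibility of f > 1/2 a.e.
  have notAc : γ Aᶜ ≠ 0 := by
    intro hc
    have hae : ∀ᵐ x ∂γ, (2⁻¹ : ℝ≥0∞) < f x := by
      rw [ae_iff]
      have hset : {x | ¬ (2⁻¹:ℝ≥0∞) < f x} = Aᶜ := by ext x; simp [hAdef]
      rw [hset]; exact hc
    have hsub : ∫⁻ x, (f x - 2⁻¹) ∂γ = 0 := by
      rw [lintegral_sub measurable_const (by rw [hinthalf]; exact one_ne_top)
        (hae.mono fun x hx => hx.le), hintf, hinthalf, tsub_self]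
    have : ∀ᵐ x ∂γ, f x - 2⁻¹ = 0 :=
      (lintegral_eq_zero_iff (hf.sub measurable_const)).1 hsub
    have hFalse : ∀ᵐ x ∂γ, False := by
      filter_upwards [hae, this] with x h1x h2x
      exact absurd (tsub_eq_zero_iff_le.mp h2x) (not_le.mpr h1x)
    have := ae_iff.mp hFalse
    simp only [not_false_eq_true, Set.setOf_true] at this
    exact hγne this
  have notBc : γ Bᶜ ≠ 0 := by
    intro hc
    have hae : ∀ᵐ x ∂γ, f x < (2⁻¹ : ℝ≥0∞) := by
      rw [ae_iff]
      have hset : {x | ¬ f x < (2⁻¹:ℝ≥0∞)} = Bᶜ := by ext x; simp [hBdef]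
      rw [hset]; exact hc
    have hsub : ∫⁻ x, ((2⁻¹ : ℝ≥0∞) - f x) ∂γ = 0 := by
      rw [lintegral_sub hf (by rw [hintf]; exact one_ne_top)
        (hae.mono fun x hx => hx.le), hintf, hinthalf, tsub_self]
    have : ∀ᵐ x ∂γ, (2⁻¹ : ℝ≥0∞) - f x = 0 :=
      (lintegral_eq_zero_iff (measurable_const.sub hf)).1 hsub
    have hFalse : ∀ᵐ x ∂γ, False := by
      filter_upwards [hae, this] with x h1x h2x
      exact absurd (tsub_eq_zero_iff_le.mp h2x) (not_le.mpr h1x)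
    have := ae_iff.mp hFalse
    simp only [not_false_eq_true, Set.setOf_true] at this
    exact hγne this
  -- α A = 0 implies γ A = 0
  have zeroA : α A = 0 → γ A = 0 := by
    intro h
    have hint0 : ∫⁻ x in A, f x ∂γ = 0 := by
      rw [← withDensity_apply _ hA, hαd]; exact h
    have h0 : ∀ᵐ x ∂γ.restrict A, f x = 0 := (lintegral_eq_zero_iff hf).1 hint0
    have hFalse : ∀ᵐ x ∂γ.restrict A, False := by
      filter_upwards [h0, ae_restrict_mem hA] with x h0x hmx
      rw [hAdef, Set.mem_setOf_eq, h0x] at hmx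
      simp at hmx
    have := ae_iff.mp hFalse
    simp only [not_false_eq_true, Set.setOf_true] at this
    rwa [Measure.restrict_apply_univ] at this
  have zeroB : β B = 0 → γ B = 0 := by
    intro h
    have hint0 : ∫⁻ x in B, g x ∂γ = 0 := by
      rw [← withDensity_apply _ hB, hβd]; exact h
    have h0 : ∀ᵐ x ∂γ.restrict B, g x = 0 := (lintegral_eq_zero_iff hg).1 hint0
    have hFalse : ∀ᵐ x ∂γ.restrict B, False := by
      filter_upwards [h0, ae_restrict_mem hB, ae_restrict_of_ae hfg] with x h0x hmx hfgx
      rw [hBdef, Set.mem_setOf_eq] at hmx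
      have : f x + g x = 1 := hfgx
      rw [h0x, add_zero] at this
      rw [this] at hmx
      exact absurd hmx (by norm_num [ENNReal.inv_lt_one])
    have := ae_iff.mp hFalse
    simp only [not_false_eq_true, Set.setOf_true] at this
    rwa [Measure.restrict_apply_univ] at this
  -- case analysis
  rcases dichA α hαγ hα with hαA | hαAc
  · rcases dichB β hβγ hβ with hβB | hβBc
    · -- α A = 0 and β B = 0 : show α = β
      left
      have hγA : γ A = 0 := zeroA hαA
      have hγB : γ B = 0 := zeroB hβB
      have hfhalf : f =ᵐ[γ] fun _ => (2⁻¹ : ℝ≥0∞) := by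
        have h1' : ∀ᵐ x ∂γ, x ∉ A := (measure_eq_zero_iff_ae_notMem).mp hγA
        have h2' : ∀ᵐ x ∂γ, x ∉ B := (measure_eq_zero_iff_ae_notMem).mp hγB
        filter_upwards [h1', h2'] with x h1x h2x
        rw [hAdef, Set.mem_setOf_eq] at h1x
        rw [hBdef, Set.mem_setOf_eq] at h2x
        exact le_antisymm (not_lt.1 h1x) (not_lt.1 h2x)
      have hghalf : g =ᵐ[γ] fun _ => (2⁻¹ : ℝ≥0∞) := by
        filter_upwards [hfg, hfhalf] with x h1x h2x
        have h1x' : f x + g x = 1 := h1x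
        rw [h2x, ← ENNReal.inv_two_add_inv_two] at h1x'
        exact (ENNReal.add_right_inj (by norm_num)).mp h1x'
      calc α = γ.withDensity f := hαd.symm
        _ = γ.withDensity (fun _ => (2⁻¹ : ℝ≥0∞)) := withDensity_congr_ae hfhalf
        _ = γ.withDensity g := (withDensity_congr_ae hghalf).symm
        _ = β := hβd
    · -- β Bᶜ = 0 : then α B = 0 (else γ Bᶜ = 0), singular
      right
      have hαB : α B = 0 := by
        rcases dichB α hαγ hα with h | h
        · exact h
        · exfalso
          apply notBc
          rw [hγdef, Measure.add_apply, h, hβBc, add_zero]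
      exact ⟨B, hB, hαB, hβBc⟩
  · -- α Aᶜ = 0 : then β A = 0, singular
    right
    have hβA : β A = 0 := by
      rcases dichA β hβγ hβ with h | h
      · exact h
      · exfalso
        apply notAc
        rw [hγdef, Measure.add_apply, hαAc, h, add_zero]
    exact ⟨Aᶜ, hA.compl, hαAc, by rwa [compl_compl]⟩

lemma ergodic_map_of_comm {X : Type*} [MeasurableSpace X] {T M : X → X}
    (hT : Measurable T) (hM : Measurable M) (hcomm : M ∘ T = T ∘ M)
    {α : Measure X} (hα : Ergodic T α) : Ergodic T (α.map M) := by
  constructor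
  · constructor
    · exact hT
    · rw [Measure.map_map hT hM, ← hcomm, ← Measure.map_map hM hT,
        hα.toMeasurePreserving.map_eq]
  · constructor
    intro s hs hinv
    have hMs : MeasurableSet (M ⁻¹' s) := hM hs
    have hMinv : T ⁻¹' (M ⁻¹' s) = M ⁻¹' s := by
      rw [← Set.preimage_comp, hcomm, Set.preimage_comp, hinv]
    refine Filter.eventuallyConst_set'.mpr ?_
    rcases hα.toPreErgodic.ae_empty_or_univ hMs hMinv with h | h
    · left
      rw [ae_eq_empty] at h ⊢
      rw [Measure.map_apply hM hs]
      exact h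
    · right
      rw [ae_eq_univ] at h ⊢
      rw [Measure.map_apply hM hs.compl, Set.preimage_compl]
      exact h

namespace Stmt10

def ish : (ℤ → Fin 4) → (ℤ → Fin 4) := fun ξ k => ξ (k - 1)

lemma measurable_ish : Measurable ish :=
  measurable_pi_lambda _ fun k => measurable_pi_apply (k - 1)

lemma ish_shift : ∀ ξ : ℤ → Fin 4, ish (shift4 ξ) = ξ := by
  intro ξ; funext k; simp [ish, shift4]

lemma shift_ish : ∀ ξ : ℤ → Fin 4, shift4 (ish ξ) = ξ := by
  intro ξ; funext k; simp [ish, shift4]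

end Stmt10


/-- for an ergodic shift-invariant measure `ν` on `Σ_A`, the mirror
measure `ν̄ = (mirror)_* ν` is shift-invariant with `Π_* ν̄ = Π_* ν`, and any ergodic
shift-invariant measure `ν̂` on `Σ_A` with `Π_* ν̂ = Π_* ν` equals `ν` or `ν̄`. -/
theorem stmt10 (ν : Measure (ℤ → Fin 4)) [IsProbabilityMeasure ν]
    (hinv : MeasurePreserving shift4 ν ν)
    (herg : Ergodic shift4 ν)
    (hsupp : ν SigmaA = 1) :
    (MeasurePreserving shift4 (ν.map mirrorSeq) (ν.map mirrorSeq) ∧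
      (ν.map mirrorSeq).map projSeq = ν.map projSeq) ∧
    ∀ νh : Measure (ℤ → Fin 4), IsProbabilityMeasure νh →
      MeasurePreserving shift4 νh νh → Ergodic shift4 νh → νh SigmaA = 1 →
      νh.map projSeq = ν.map projSeq →
      νh = ν ∨ νh = ν.map mirrorSeq := by
  have hMcomm : mirrorSeq ∘ shift4 = shift4 ∘ mirrorSeq := rfl
  have hpart1 : MeasurePreserving shift4 (ν.map mirrorSeq) (ν.map mirrorSeq) := by
    constructor
    · exact Stmt10.measurable_shift4
    · rw [Measure.map_map Stmt10.measurable_shift4 Stmt10.measurable_mirrorSeq, ← hMcomm,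
        ← Measure.map_map Stmt10.measurable_mirrorSeq Stmt10.measurable_shift4, hinv.map_eq]
  have hpart2 : (ν.map mirrorSeq).map projSeq = ν.map projSeq := by
    rw [Measure.map_map Stmt10.measurable_projSeq Stmt10.measurable_mirrorSeq,
      Stmt10.proj_mirror]
  refine ⟨⟨hpart1, hpart2⟩, ?_⟩
  intro νh hνhP hνhinv hνherg hνhsupp hproj
  haveI := hνhP
  haveI : IsProbabilityMeasure (ν.map mirrorSeq) :=
    Measure.isProbabilityMeasure_map Stmt10.measurable_mirrorSeq.aemeasurable
  have hνMerg : Ergodic shift4 (ν.map mirrorSeq) :=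
    ergodic_map_of_comm Stmt10.measurable_shift4 Stmt10.measurable_mirrorSeq hMcomm herg
  have hsum : νh + νh.map mirrorSeq = ν + ν.map mirrorSeq := by
    rw [Stmt10.fiber_sum νh hνhsupp, Stmt10.fiber_sum ν hsupp, hproj]
  rcases ergodic_dichotomy Stmt10.measurable_shift4 Stmt10.measurable_ish
      Stmt10.ish_shift Stmt10.shift_ish νh ν hνherg herg with h | h1
  · exact Or.inl h
  rcases ergodic_dichotomy Stmt10.measurable_shift4 Stmt10.measurable_ish
      Stmt10.ish_shift Stmt10.shift_ish νh (ν.map mirrorSeq) hνherg hνMerg with h | h2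
  · exact Or.inr h
  exfalso
  have hle : νh ≤ ν + ν.map mirrorSeq := by
    rw [← hsum]; exact Measure.le_add_right le_rfl
  have hself : νh ⟂ₘ νh := (h1.add_right h2).mono le_rfl hle
  rw [Measure.MutuallySingular.self_iff] at hself
  have h0 := measure_univ (μ := νh)
  rw [hself] at h0
  simp at h0
end
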